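/- Let α ≥ 2 and let (V, d) be a finite metric space with root vertex 0. Suppose a tree T on vertex set V admits a partition of its edges into levels E¹,…,Eʳ such that (i) for each l and each connected component of E¹∪⋯∪Eˡ, the head j of the component (the vertex maximizing an assigned value b(j), with b(0)=∞) satisfies b(j) ≥ l, and (ii) every edge in Eˡ has length at most 2α^(l+1). Then the total edge length of T is at most (2α³/(α-1))·Σ_{v ≠ 0} α^(b(v)). -/

import Mathlib

/-- The length of a tree edge, as a function on `Sym2 V`, in a metric space. -/
noncomputable def edgeLen (V : Type*) [MetricSpace V] : Sym2 V → ℝ :=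
  Sym2.lift ⟨fun u w => dist u w, fun u w => dist_comm u w⟩

open SimpleGraph

section Aux

variable {V : Type*} [DecidableEq V] {T : SimpleGraph V} {root : V}

private lemma path_unique' (hT : T.IsTree) {u v : V} {p q : T.Walk u v}
    (hp : p.IsPath) (hq : q.IsPath) : p = q :=
  (hT.existsUnique_path u v).unique hp hq

private lemma sep_iff (hT : T.IsTree) {v : V} (e : Sym2 V) (p : T.Walk v root)
    (hp : p.IsPath) : ¬(T.deleteEdges {e}).Reachable v root ↔ e ∈ p.edges := by
  constructor
  · intro h
    by_contra he
    exact h ⟨p.toDeleteEdge e he⟩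
  · rintro he ⟨w⟩
    have hsub : ∀ e' ∈ w.edges, e' ∈ T.edgeSet := by
      intro e' he'
      have h := w.edges_subset_edgeSet he'
      rw [edgeSet_deleteEdges] at h
      exact h.1
    have hnotin : e ∉ w.edges := by
      intro he'
      have h := w.edges_subset_edgeSet he'
      rw [edgeSet_deleteEdges] at h
      exact h.2 rfl
    have hq : ((w.transfer T hsub).toPath : T.Walk v root) = p :=
      path_unique' hT (w.transfer T hsub).toPath.2 hp
    apply hnotin
    rw [← w.edges_transfer hsub]
    apply Walk.edges_toPath_subset
    rw [hq]
    exact he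

private lemma first_edge {v w x : V} {p : T.Walk v w} (hp : p.IsPath)
    (he : s(v, x) ∈ p.edges) :
    ∃ q : T.Walk x w, q.IsPath ∧ q.length + 1 = p.length ∧
      p.edges = s(v, x) :: q.edges := by
  cases p with
  | nil => simp at he
  | cons h q =>
    rw [Walk.edges_cons, List.mem_cons] at he
    rw [Walk.cons_isPath_iff] at hp
    rcases he with he | he
    · obtain rfl := Sym2.congr_right.mp he
      exact ⟨q, hp.1, by simp, by simp⟩
    · exact absurd (Walk.fst_mem_support_of_mem_edges q he) hp.2

private lemma aux_lt (hT : T.IsTree) {e1 e2 : Sym2 V} {c1 c2 : V}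
    (hne : e1 ≠ e2) (hc1 : c1 ∈ e1) (hc2 : c2 ∈ e2)
    (h11 : ¬(T.deleteEdges {e1}).Reachable c1 root)
    (h21 : ¬(T.deleteEdges {e2}).Reachable c1 root)
    {p1 : T.Walk c1 root} (hp1 : p1.IsPath)
    {p2 : T.Walk c2 root} (hp2 : p2.IsPath) :
    p2.length < p1.length := by
  obtain ⟨x1, rfl⟩ := Sym2.mem_iff_exists.mp hc1
  have he1 : s(c1, x1) ∈ p1.edges := (sep_iff hT _ p1 hp1).mp h11
  have he2 : e2 ∈ p1.edges := (sep_iff hT _ p1 hp1).mp h21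
  obtain ⟨t1, ht1p, ht1l, ht1e⟩ := first_edge hp1 he1
  have he2t : e2 ∈ t1.edges := by
    rw [ht1e, List.mem_cons] at he2
    rcases he2 with h | h
    · exact absurd h.symm hne
    · exact h
  obtain ⟨x2, rfl⟩ := Sym2.mem_iff_exists.mp hc2
  have hc2s : c2 ∈ t1.support := Walk.fst_mem_support_of_mem_edges t1 he2t
  have hq : (t1.dropUntil c2 hc2s) = p2 :=
    path_unique' hT (ht1p.dropUntil hc2s) hp2
  have hle : p2.length ≤ t1.length := by
    rw [← hq]; exact Walk.length_dropUntil_le t1 hc2s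
  omega

end Aux

private lemma card_bound {V : Type*} [Fintype V] [DecidableEq V]
    (T : SimpleGraph V) [DecidableRel T.Adj] (hT : T.IsTree) (root : V)
    (b : V → ℕ) (lev : Sym2 V → ℕ) (k : ℕ)
    (hh : ∀ v : V, ∃ j : V,
      (SimpleGraph.fromEdgeSet {e | e ∈ T.edgeSet ∧ lev e ≤ k}).Reachable v j ∧
      (j = root ∨ k ≤ b j)) :
    (T.edgeFinset.filter fun e => k + 1 ≤ lev e).card ≤
      ((Finset.univ.erase root).filter fun v => k ≤ b v).card := by
  classical
  cases isEmpty_or_nonempty V with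
  | inl h =>
    have : (T.edgeFinset.filter fun e => k + 1 ≤ lev e) = ∅ := by
      apply Finset.eq_empty_of_forall_notMem
      intro e he
      induction e using Sym2.ind with
      | _ u w => exact IsEmpty.elim h u
    simp [this]
  | inr hne =>
  inhabit V
  set F := SimpleGraph.fromEdgeSet {e | e ∈ T.edgeSet ∧ lev e ≤ k} with hF
  have hFle : ∀ e : Sym2 V, k + 1 ≤ lev e → F ≤ T.deleteEdges {e} := by
    intro e hke
    rw [← SimpleGraph.edgeSet_subset_edgeSet]
    intro e' he'
    rw [hF, SimpleGraph.edgeSet_fromEdgeSet] at he'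
    rw [SimpleGraph.edgeSet_deleteEdges]
    refine ⟨he'.1.1, ?_⟩
    intro hmem
    rw [Set.mem_singleton_iff] at hmem
    subst hmem
    have := he'.1.2
    omega
  have hcp : ∀ e ∈ T.edgeFinset.filter (fun e => k + 1 ≤ lev e),
      ∃ c j : V, c ∈ e ∧ ¬(T.deleteEdges {e}).Reachable c root ∧
        F.Reachable c j ∧ j ≠ root ∧ k ≤ b j := by
    intro e heS
    induction e using Sym2.ind with
    | _ u w =>
      rw [Finset.mem_filter, SimpleGraph.mem_edgeFinset, SimpleGraph.mem_edgeSet] at heS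
      obtain ⟨hadj, hke⟩ := heS
      have hbr : ¬(T.deleteEdges {s(u, w)}).Reachable u w := by
        have hb := (SimpleGraph.isAcyclic_iff_forall_adj_isBridge.mp hT.IsAcyclic) hadj
        rw [SimpleGraph.isBridge_iff] at hb
        exact hb
      have pick : ∀ c : V, c ∈ (s(u, w) : Sym2 V) →
          ¬(T.deleteEdges {s(u, w)}).Reachable c root →
          ∃ c' j : V, c' ∈ (s(u, w) : Sym2 V) ∧
            ¬(T.deleteEdges {s(u, w)}).Reachable c' root ∧
            F.Reachable c' j ∧ j ≠ root ∧ k ≤ b j := by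
        intro c hcmem hcr
        obtain ⟨j, hj1, hj2⟩ := hh c
        have hjr : j ≠ root := by
          rintro rfl
          exact hcr (hj1.mono (hFle _ hke))
        exact ⟨c, j, hcmem, hcr, hj1, hjr, hj2.resolve_left hjr⟩
      by_cases hcu : (T.deleteEdges {s(u, w)}).Reachable u root
      · have hw : ¬(T.deleteEdges {s(u, w)}).Reachable w root := by
          intro h
          exact hbr (hcu.trans h.symm)
        exact pick w (by simp) hw
      · exact pick u (by simp) hcu
  choose! c j hmem hsep hreach hjroot hjb using hcp
  apply Finset.card_le_card_of_injOn j
  · intro e he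
    rw [Finset.mem_coe, Finset.mem_filter, Finset.mem_erase]
    exact ⟨⟨hjroot e he, Finset.mem_univ _⟩, hjb e he⟩
  · intro e1 h1 e2 h2 hj
    rw [Finset.mem_coe] at h1 h2
    by_contra hne12
    have hk1 : k + 1 ≤ lev e1 := (Finset.mem_filter.mp h1).2
    have hk2 : k + 1 ≤ lev e2 := (Finset.mem_filter.mp h2).2
    have hr12 : F.Reachable (c e1) (c e2) := by
      have a := hreach e1 h1
      have b2 := hreach e2 h2
      rw [← hj] at b2
      exact a.trans b2.symm
    have hsep12 : ¬(T.deleteEdges {e1}).Reachable (c e2) root := by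
      intro h
      exact hsep e1 h1 ((hr12.mono (hFle e1 hk1)).trans h)
    have hsep21 : ¬(T.deleteEdges {e2}).Reachable (c e1) root := by
      intro h
      exact hsep e2 h2 ((hr12.symm.mono (hFle e2 hk2)).trans h)
    obtain ⟨w1⟩ := hT.isConnected.preconnected (c e1) root
    obtain ⟨w2⟩ := hT.isConnected.preconnected (c e2) root
    have l1 := aux_lt hT hne12 (hmem e1 h1) (hmem e2 h2) (hsep e1 h1) hsep21
      w1.toPath.2 w2.toPath.2
    have l2 := aux_lt hT (Ne.symm hne12) (hmem e2 h2) (hmem e1 h1) (hsep e2 h2) hsep12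
      w2.toPath.2 w1.toPath.2
    omega

private lemma tele (α : ℝ) (m : ℕ) :
    ∑ i ∈ Finset.range m, (α ^ (i + 3) - α ^ (i + 2)) = α ^ (m + 2) - α ^ 2 := by
  induction m with
  | zero => simp
  | succ n ih =>
    rw [Finset.sum_range_succ, ih]
    ring_nf

theorem stmt_8 (V : Type*) [Fintype V] [DecidableEq V] [MetricSpace V]
    (root : V) (α : ℝ) (hα : 2 ≤ α) (b : V → ℕ)
    (T : SimpleGraph V) [DecidableRel T.Adj] (hT : T.IsTree)
    (r : ℕ) (lev : Sym2 V → ℕ)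
    (hlev : ∀ e ∈ T.edgeSet, 1 ≤ lev e ∧ lev e ≤ r)
    -- (i): the head of each component of the first l levels has b-value ≥ l
    (hhead : ∀ l : ℕ, 1 ≤ l → l ≤ r → ∀ v : V,
      ∃ j : V, (SimpleGraph.fromEdgeSet {e | e ∈ T.edgeSet ∧ lev e ≤ l}).Reachable v j ∧
        (j = root ∨ l ≤ b j))
    -- (ii): edges at level l have length at most 2α^(l+1)
    (hlen : ∀ u w : V, T.Adj u w → dist u w ≤ 2 * α ^ (lev s(u, w) + 1)) :
    ∑ e ∈ T.edgeFinset, edgeLen V e ≤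
      (2 * α ^ 3 / (α - 1)) * ∑ v ∈ Finset.univ.erase root, α ^ (b v) := by
  classical
  have hα0 : (0:ℝ) < α := by linarith
  have hα1 : (1:ℝ) ≤ α := by linarith
  set R := Finset.univ.erase root with hR
  set Sv : ℝ := ∑ v ∈ R, α ^ (b v) with hSv
  have hSv0 : 0 ≤ Sv := Finset.sum_nonneg fun v _ => pow_nonneg hα0.le _
  have hM : ∀ k : ℕ, (∀ v : V, ∃ j : V,
      (SimpleGraph.fromEdgeSet {e | e ∈ T.edgeSet ∧ lev e ≤ k}).Reachable v j ∧
      (j = root ∨ k ≤ b j)) →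
      ((T.edgeFinset.filter fun e => k + 1 ≤ lev e).card : ℝ) ≤
      ((R.filter fun v => k ≤ b v).card : ℝ) := by
    intro k hk
    exact_mod_cast card_bound T hT root b lev k hk
  have h0 : ((T.edgeFinset.card : ℝ)) ≤ (R.card : ℝ) := by
    have h := hM 0 (fun v => ⟨v, Reachable.refl v, Or.inr (Nat.zero_le _)⟩)
    have e1 : T.edgeFinset.filter (fun e => 0 + 1 ≤ lev e) = T.edgeFinset := by
      apply Finset.filter_true_of_mem
      intro e he
      have := hlev e (SimpleGraph.mem_edgeFinset.mp he)
      omega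
    have e2 : R.filter (fun v => 0 ≤ b v) = R :=
      Finset.filter_true_of_mem (fun _ _ => Nat.zero_le _)
    rw [e1, e2] at h
    exact h
  have hN : ∀ i ∈ Finset.range r,
      ((T.edgeFinset.filter fun e => i + 1 + 1 ≤ lev e).card : ℝ) ≤
      ((R.filter fun v => i + 1 ≤ b v).card : ℝ) := by
    intro i hi
    rw [Finset.mem_range] at hi
    exact hM (i + 1) (fun v => hhead (i + 1) (by omega) (by omega) v)
  have inner : ∑ e ∈ T.edgeFinset, α ^ (lev e + 1) ≤ α ^ 2 * Sv := by
    have step3 : ∀ e ∈ T.edgeFinset, α ^ (lev e + 1) =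
        α ^ 2 + ∑ i ∈ Finset.range r,
          (if i + 1 + 1 ≤ lev e then α ^ (i + 3) - α ^ (i + 2) else 0) := by
      intro e he
      obtain ⟨hl1, hl2⟩ := hlev e (SimpleGraph.mem_edgeFinset.mp he)
      rw [← Finset.sum_filter]
      have hfe : (Finset.range r).filter (fun i => i + 1 + 1 ≤ lev e) =
          Finset.range (lev e - 1) := by
        ext i
        simp only [Finset.mem_filter, Finset.mem_range]
        omega
      rw [hfe, tele, show lev e - 1 + 2 = lev e + 1 from by omega]
      ring
    calc ∑ e ∈ T.edgeFinset, α ^ (lev e + 1)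
        = ∑ e ∈ T.edgeFinset, (α ^ 2 + ∑ i ∈ Finset.range r,
            (if i + 1 + 1 ≤ lev e then α ^ (i + 3) - α ^ (i + 2) else 0)) :=
          Finset.sum_congr rfl step3
      _ = (T.edgeFinset.card : ℝ) * α ^ 2 + ∑ e ∈ T.edgeFinset, ∑ i ∈ Finset.range r,
            (if i + 1 + 1 ≤ lev e then α ^ (i + 3) - α ^ (i + 2) else 0) := by
          rw [Finset.sum_add_distrib, Finset.sum_const, nsmul_eq_mul]
      _ = (T.edgeFinset.card : ℝ) * α ^ 2 + ∑ i ∈ Finset.range r, ∑ e ∈ T.edgeFinset,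
            (if i + 1 + 1 ≤ lev e then α ^ (i + 3) - α ^ (i + 2) else 0) := by
          rw [Finset.sum_comm]
      _ = (T.edgeFinset.card : ℝ) * α ^ 2 + ∑ i ∈ Finset.range r,
            ((T.edgeFinset.filter fun e => i + 1 + 1 ≤ lev e).card : ℝ) *
              (α ^ (i + 3) - α ^ (i + 2)) := by
          congr 1
          apply Finset.sum_congr rfl
          intro i _
          rw [← Finset.sum_filter, Finset.sum_const, nsmul_eq_mul]
      _ ≤ (R.card : ℝ) * α ^ 2 + ∑ i ∈ Finset.range r,
            ((R.filter fun v => i + 1 ≤ b v).card : ℝ) * (α ^ (i + 3) - α ^ (i + 2)) := by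
          apply add_le_add
          · exact mul_le_mul_of_nonneg_right h0 (pow_nonneg hα0.le _)
          · apply Finset.sum_le_sum
            intro i hi
            apply mul_le_mul_of_nonneg_right (hN i hi)
            have : α ^ (i + 2) ≤ α ^ (i + 3) := pow_le_pow_right₀ hα1 (by omega)
            linarith
      _ = ∑ v ∈ R, (α ^ 2 + ∑ i ∈ Finset.range r,
            (if i + 1 ≤ b v then α ^ (i + 3) - α ^ (i + 2) else 0)) := by
          rw [Finset.sum_add_distrib]
          congr 1
          · rw [Finset.sum_const, nsmul_eq_mul]
          · rw [Finset.sum_comm]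
            apply Finset.sum_congr rfl
            intro i _
            rw [Finset.natCast_card_filter, Finset.sum_mul]
            apply Finset.sum_congr rfl
            intro v _
            by_cases h : i + 1 ≤ b v <;> simp [h]
      _ ≤ ∑ v ∈ R, (α ^ 2 + (α ^ (b v + 2) - α ^ 2)) := by
          apply Finset.sum_le_sum
          intro v _
          apply (add_le_add_iff_left _).mpr
          rw [← Finset.sum_filter]
          calc ∑ i ∈ (Finset.range r).filter (fun i => i + 1 ≤ b v),
                (α ^ (i + 3) - α ^ (i + 2))
              ≤ ∑ i ∈ Finset.range (b v), (α ^ (i + 3) - α ^ (i + 2)) := by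
                apply Finset.sum_le_sum_of_subset_of_nonneg
                · intro i hi
                  rw [Finset.mem_filter, Finset.mem_range] at hi
                  rw [Finset.mem_range]
                  omega
                · intro i _ _
                  have : α ^ (i + 2) ≤ α ^ (i + 3) := pow_le_pow_right₀ hα1 (by omega)
                  linarith
            _ = α ^ (b v + 2) - α ^ 2 := tele α (b v)
      _ = α ^ 2 * Sv := by
          rw [hSv, Finset.mul_sum]
          apply Finset.sum_congr rfl
          intro v _
          rw [pow_add]
          ring
  calc ∑ e ∈ T.edgeFinset, edgeLen V e
      ≤ ∑ e ∈ T.edgeFinset, 2 * α ^ (lev e + 1) := by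
        apply Finset.sum_le_sum
        intro e he
        revert he
        induction e using Sym2.ind with
        | _ u w =>
          intro he
          rw [SimpleGraph.mem_edgeFinset, SimpleGraph.mem_edgeSet] at he
          simpa [edgeLen] using hlen u w he
    _ = 2 * ∑ e ∈ T.edgeFinset, α ^ (lev e + 1) := by rw [Finset.mul_sum]
    _ ≤ 2 * (α ^ 2 * Sv) := by linarith
    _ ≤ (2 * α ^ 3 / (α - 1)) * Sv := by
        rw [div_mul_eq_mul_div, le_div_iff₀ (by linarith : (0:ℝ) < α - 1)]
        nlinarith [mul_nonneg (mul_nonneg hα0.le hα0.le) hSv0]
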